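/- The rate sequence ρ is nondecreasing in k, satisfies ρ(k) ≤ r + 1/4 for every k ≥ 0, and is eventually equal to its optimal value: ρ(k) = r + 1/4 for every k ≥ K₁(ψ,r) + K̃₂(ψ,r) + 1. (In the paper: the k-step estimator's rate toward the MLE improves monotonically up to the intrinsic bound O_P(n^{−r−1/4}) determined by how accurately the nuisance parameter is estimated, and reaches that bound after finitely many iterations.) -/
import Mathlib


/-!
Statement 2: monotonicity of the rate sequence, the intrinsic bound `r + 1/4`,
and the fact that the bound is attained after finitely many iterations.
-/

/-- `intLe x` is the smallest nonnegative integer `≥ x` (the paper's `int[x]`). -/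
noncomputable def intLe (x : ℝ) : ℕ := sInf {k : ℕ | x ≤ (k : ℝ)}

/-- The rate sequence `ρ` of Lemma 1: `ρ(0) = ψ` and the three-stage recursion. -/
noncomputable def rateSeq (r ψ : ℝ) : ℕ → ℝ
  | 0 => ψ
  | k + 1 =>
    if rateSeq r ψ k < r then (3 / 2) * rateSeq r ψ k
    else if rateSeq r ψ k < 1 / 2 then r + rateSeq r ψ k / 2
    else r + 1 / 4

/-- `S₁(ψ,k) = ψ (3/2)^k`. -/
noncomputable def S1 (ψ : ℝ) (k : ℕ) : ℝ := ψ * (3 / 2) ^ k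

/-- `K₁(ψ,r) = int[log(r/ψ)/log(3/2)]`. -/
noncomputable def K1 (ψ r : ℝ) : ℕ := intLe (Real.log (r / ψ) / Real.log (3 / 2))

/-- `S̃₁(ψ,r) = S₁(ψ, K₁(ψ,r))`. -/
noncomputable def S1t (ψ r : ℝ) : ℝ := S1 ψ (K1 ψ r)

/-- `K₂(x,r) = int[log((2r−x)/(2r−1/2))/log 2]`. -/
noncomputable def K2 (x r : ℝ) : ℕ :=
  intLe (Real.log ((2 * r - x) / (2 * r - 1 / 2)) / Real.log 2)

/-- `K̃₂(ψ,r) = K₂(S̃₁(ψ,r), r)`. -/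
noncomputable def K2t (ψ r : ℝ) : ℕ := K2 (S1t ψ r) r

lemma intLe_eq (x : ℝ) : intLe x = ⌈x⌉₊ := by
  have h : {k : ℕ | x ≤ (k : ℝ)} = Set.Ici ⌈x⌉₊ := by
    ext k; simp [Nat.ceil_le]
  rw [intLe, h, csInf_Ici]

lemma le_intLe (x : ℝ) : x ≤ intLe x := by rw [intLe_eq]; exact Nat.le_ceil x

lemma lt_of_lt_intLe {x : ℝ} {n : ℕ} (h : n < intLe x) : (n : ℝ) < x := by
  rw [intLe_eq, Nat.lt_ceil] at h; exact h

lemma le_pow_of_log {a b : ℝ} {n : ℕ} (ha : 0 < a) (hb : 1 < b)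
    (h : Real.log a / Real.log b ≤ n) : a ≤ b ^ n := by
  have hlb : 0 < Real.log b := Real.log_pos hb
  rw [div_le_iff₀ hlb] at h
  have h2 : Real.log a ≤ Real.log (b ^ n) := by rw [Real.log_pow]; linarith
  exact (Real.log_le_log_iff ha (by positivity)).mp h2

lemma pow_lt_of_lt_log {a b : ℝ} {n : ℕ} (ha : 0 < a) (hb : 1 < b)
    (h : (n : ℝ) < Real.log a / Real.log b) : b ^ n < a := by
  have hlb : 0 < Real.log b := Real.log_pos hb
  rw [lt_div_iff₀ hlb] at h
  have h2 : Real.log (b ^ n) < Real.log a := by rw [Real.log_pow]; linarith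
  exact (Real.log_lt_log_iff (by positivity) ha).mp h2

set_option maxHeartbeats 1000000 in
/-- The rate sequence `ρ` is nondecreasing, bounded above by `r + 1/4`,
and equals `r + 1/4` for every `k ≥ K₁(ψ,r) + K̃₂(ψ,r) + 1`. -/
theorem rateSeq_monotone_bounded_eventually (r ψ : ℝ) (hr1 : 1 / 4 < r) (hr2 : r ≤ 1 / 2)
    (hψ1 : 0 < ψ) (hψ2 : ψ ≤ 1 / 2) :
    (∀ k : ℕ, rateSeq r ψ k ≤ rateSeq r ψ (k + 1)) ∧
    (∀ k : ℕ, rateSeq r ψ k ≤ r + 1 / 4) ∧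
    (∀ k : ℕ, K1 ψ r + K2t ψ r + 1 ≤ k → rateSeq r ψ k = r + 1 / 4) := by
  have hr0 : (0:ℝ) < r := by linarith
  have hstep : ∀ k, rateSeq r ψ (k+1) =
      if rateSeq r ψ k < r then (3 / 2) * rateSeq r ψ k
      else if rateSeq r ψ k < 1 / 2 then r + rateSeq r ψ k / 2
      else r + 1 / 4 := fun k => by rw [rateSeq]
  -- positivity
  have hpos : ∀ k, 0 < rateSeq r ψ k := by
    intro k
    induction k with
    | zero => exact hψ1
    | succ n ih =>
      rw [hstep]
      split_ifs <;> linarith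
  -- upper bound
  have hub : ∀ k, rateSeq r ψ k ≤ r + 1 / 4 := by
    intro k
    induction k with
    | zero => show ψ ≤ r + 1/4; linarith
    | succ n ih =>
      rw [hstep]
      split_ifs with h1 h2 <;> linarith
  -- monotone
  have hmono : ∀ k, rateSeq r ψ k ≤ rateSeq r ψ (k + 1) := by
    intro k
    rw [hstep]
    have := hpos k
    have := hub k
    split_ifs with h1 h2 <;> linarith
  refine ⟨hmono, hub, ?_⟩
  -- key quantities
  set K := K1 ψ r with hK
  set x := S1t ψ r with hx
  have hxdef : x = ψ * (3/2) ^ K := rfl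
  -- r ≤ x
  have hrx : r ≤ x := by
    have h1 : r / ψ ≤ (3/2 : ℝ) ^ K := by
      rcases le_or_gt (r / ψ) 0 with h | h
      · exact le_trans h (by positivity)
      · exact le_pow_of_log h (by norm_num) (le_intLe _)
    rw [hxdef]
    calc r = ψ * (r / ψ) := by field_simp
    _ ≤ ψ * (3/2) ^ K := by
        exact mul_le_mul_of_nonneg_left h1 hψ1.le
  -- x < 2r
  have hx2r : x < 2 * r := by
    rcases Nat.eq_zero_or_pos K with h0 | h0
    · have hxe : x = ψ := by rw [hxdef, h0]; norm_num
      linarith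
    · obtain ⟨m, hm⟩ := Nat.exists_eq_add_of_lt h0
      have hmK : m < K := by omega
      have hlt : (m : ℝ) < Real.log (r / ψ) / Real.log (3/2) := lt_of_lt_intLe hmK
      have h1 : (3/2 : ℝ) ^ m < r / ψ := pow_lt_of_lt_log (by positivity) (by norm_num) hlt
      have h2 : ψ * (3/2:ℝ) ^ m < r := by
        rw [mul_comm, ← lt_div_iff₀ hψ1]; exact h1
      have hK' : K = m + 1 := by omega
      have hxe : x = ψ * (3/2:ℝ) ^ m * (3/2) := by
        rw [hxdef, hK', pow_succ]; ring
      rw [hxe]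
      nlinarith
  have hd0 : 0 < 2 * r - x := by linarith
  have hhalf : 0 < 2 * r - 1/2 := by linarith
  -- K2 property
  have hK2 : (2 * r - x) / 2 ^ (K2t ψ r) ≤ 2 * r - 1/2 := by
    have h1 : (2 * r - x) / (2 * r - 1/2) ≤ (2:ℝ) ^ (K2t ψ r) := by
      rcases le_or_gt ((2 * r - x) / (2 * r - 1/2)) 0 with h | h
      · exact le_trans h (by positivity)
      · exact le_pow_of_log h (by norm_num) (le_intLe _)
    rw [div_le_iff₀ (by positivity)]
    rw [div_le_iff₀ hhalf] at h1
    linarith [h1]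
  -- phase 1 invariant
  have hA : ∀ k, k ≤ K → 1/2 ≤ rateSeq r ψ k ∨ ψ * (3/2) ^ k ≤ rateSeq r ψ k := by
    intro k
    induction k with
    | zero => intro _; right; simp [rateSeq]
    | succ n ih =>
      intro hn
      have hnK : n < K := by omega
      rcases ih (by omega) with h | h
      · left
        rw [hstep]
        split_ifs with h1 h2 <;> linarith
      · have hlt : (n : ℝ) < Real.log (r / ψ) / Real.log (3/2) := lt_of_lt_intLe hnK
        have hpow : (3/2 : ℝ) ^ n < r / ψ := pow_lt_of_lt_log (by positivity) (by norm_num) hlt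
        have hsn : ψ * (3/2:ℝ) ^ n < r := by
          rw [mul_comm, ← lt_div_iff₀ hψ1]; exact hpow
        right
        rw [hstep]
        have hps : ψ * (3/2:ℝ) ^ (n+1) = (3/2) * (ψ * (3/2)^n) := by ring
        split_ifs with h1 h2
        · rw [hps]; linarith
        · rw [hps]; nlinarith
        · rw [hps]; nlinarith
  -- phase 2 invariant
  have hB : ∀ j, 1/2 ≤ rateSeq r ψ (K + j) ∨
      2 * r - (2 * r - x) / 2 ^ j ≤ rateSeq r ψ (K + j) := by
    intro j
    induction j with
    | zero =>
      rcases hA K le_rfl with h | h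
      · exact Or.inl h
      · right; rw [← hxdef] at h; simpa using by linarith [h]
    | succ n ih =>
      have hdn : (2 * r - x) / 2 ^ n ≤ 2 * r - x := by
        rw [div_le_iff₀ (by positivity)]
        nlinarith [one_le_pow₀ (by norm_num : (1:ℝ) ≤ 2) (n := n)]
      rcases ih with h | h
      · left
        rw [show K + (n+1) = (K + n) + 1 from rfl, hstep]
        split_ifs with h1 h2 <;> linarith
      · have hlow : r ≤ rateSeq r ψ (K + n) := by linarith
        rcases le_or_gt (1/2 : ℝ) (rateSeq r ψ (K + n)) with hge | hlt
        · left
          rw [show K + (n+1) = (K + n) + 1 from rfl, hstep]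
          split_ifs with h1 h2 <;> linarith
        · right
          rw [show K + (n+1) = (K + n) + 1 from rfl, hstep]
          have hd2 : (2 * r - x) / 2 ^ (n+1) = ((2 * r - x) / 2 ^ n) / 2 := by
            rw [pow_succ]; ring
          split_ifs with h1 h2 <;> linarith [hd2]
  -- after K + K2t, sequence is ≥ 1/2
  have hC : ∀ j, 1/2 ≤ rateSeq r ψ (K + K2t ψ r + j) := by
    intro j
    induction j with
    | zero =>
      simp only [Nat.add_zero]
      rcases hB (K2t ψ r) with h | h
      · exact h
      · linarith [hK2]
    | succ n ih =>
      rw [show K + K2t ψ r + (n+1) = (K + K2t ψ r + n) + 1 from rfl, hstep]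
      split_ifs with h1 h2 <;> linarith
  intro k hk
  obtain ⟨m, rfl⟩ : ∃ m, k = (K + K2t ψ r + m) + 1 := ⟨k - (K + K2t ψ r + 1), by omega⟩
  rw [hstep]
  have := hC m
  split_ifs with h1 h2 <;> linarith
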